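/- There is an isomorphism of groups φ : G2 → G1 with φ(s) = ab and φ(t) = aba, whose inverse sends a to s⁻¹t and b to t⁻¹s². -/

import Mathlib

/-- `SL(2,ℤ)`: 2×2 integer matrices of determinant 1. -/
abbrev SL2Z := Matrix.SpecialLinearGroup (Fin 2) ℤ

/-- The matrix `A = !![1,1; 0,1]` as an element of `SL(2,ℤ)`. -/
def MA : SL2Z := ⟨!![1, 1; 0, 1], by norm_num [Matrix.det_fin_two_of]⟩

/-- The matrix `B = !![1,0; -1,1]` as an element of `SL(2,ℤ)`. -/
def MB : SL2Z := ⟨!![1, 0; -1, 1], by norm_num [Matrix.det_fin_two_of]⟩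

/-- Relations for the presented group `G1 = ⟨a, b | aba = bab, (aba)⁴ = 1⟩`,
with `a` corresponding to `0` and `b` to `1`. -/
def g1Rels : Set (FreeGroup (Fin 2)) :=
  { FreeGroup.of 0 * FreeGroup.of 1 * FreeGroup.of 0 *
      (FreeGroup.of 1 * FreeGroup.of 0 * FreeGroup.of 1)⁻¹,
    (FreeGroup.of 0 * FreeGroup.of 1 * FreeGroup.of 0) ^ 4 }

/-- The presented group `G1 = ⟨a, b | aba = bab, (aba)⁴ = 1⟩`. -/
abbrev G1 := PresentedGroup g1Rels

/-- The generator `a` of `G1`. -/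
def ga : G1 := PresentedGroup.of 0

/-- The generator `b` of `G1`. -/
def gb : G1 := PresentedGroup.of 1

/-- Relations for the presented group `G2 = ⟨s, t | s³ = t², t⁴ = 1⟩`,
with `s` corresponding to `0` and `t` to `1`. -/
def g2Rels : Set (FreeGroup (Fin 2)) :=
  { FreeGroup.of 0 ^ 3 * (FreeGroup.of 1 ^ 2)⁻¹, FreeGroup.of 1 ^ 4 }

/-- The presented group `G2 = ⟨s, t | s³ = t², t⁴ = 1⟩`. -/
abbrev G2 := PresentedGroup g2Rels

/-- The generator `s` of `G2`. -/
def g2s : G2 := PresentedGroup.of 0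

/-- The generator `t` of `G2`. -/
def g2t : G2 := PresentedGroup.of 1

section
-- helper lemmas
lemma rel_one {α : Type*} {rels : Set (FreeGroup α)} {r : FreeGroup α} (h : r ∈ rels) :
    (QuotientGroup.mk r : PresentedGroup rels) = 1 := by
  rw [QuotientGroup.eq_one_iff]
  exact Subgroup.subset_normalClosure h

lemma h1 : ga * gb * ga = gb * ga * gb := by
  have := rel_one (rels := g1Rels) (Or.inl rfl)
  simp only [ga, gb, PresentedGroup.of]
  rw [← mul_inv_eq_one]
  exact this

lemma h2 : (ga * gb * ga) ^ 4 = 1 := by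
  have := rel_one (rels := g1Rels) (Or.inr rfl)
  simp only [ga, gb, PresentedGroup.of]
  exact this

lemma hs3 : g2s ^ 3 = g2t ^ 2 := by
  have := rel_one (rels := g2Rels) (Or.inl rfl)
  simp only [g2s, g2t, PresentedGroup.of]
  rw [← mul_inv_eq_one]
  exact this

lemma ht4 : g2t ^ 4 = 1 := by
  have := rel_one (rels := g2Rels) (Or.inr rfl)
  simp only [g2s, g2t, PresentedGroup.of]
  exact this

def Ff : Fin 2 → G1 := ![ga * gb, ga * gb * ga]
def Fg : Fin 2 → G2 := ![g2s⁻¹ * g2t, g2t⁻¹ * g2s ^ 2]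

lemma hf : ∀ r ∈ g2Rels, FreeGroup.lift Ff r = 1 := by
  rintro r (rfl | rfl) <;>
    simp only [map_mul, map_inv, map_pow, FreeGroup.lift_apply_of, Ff,
      Matrix.cons_val_zero, Matrix.cons_val_one, Matrix.head_cons]
  · rw [mul_inv_eq_one]
    have e : (ga * gb) ^ 3 = (ga * gb * ga) * (gb * ga * gb) := by
      simp [pow_succ, mul_assoc]
    rw [e, ← h1, sq]
  · calc ((ga*gb*ga):G1) ^ 4 = 1 := h2

lemma hg : ∀ r ∈ g1Rels, FreeGroup.lift Fg r = 1 := by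
  rintro r (rfl | rfl) <;>
    simp only [map_mul, map_inv, map_pow, FreeGroup.lift_apply_of, Fg,
      Matrix.cons_val_zero, Matrix.cons_val_one, Matrix.head_cons]
  · rw [mul_inv_eq_one]
    have l : (g2s⁻¹ * g2t) * (g2t⁻¹ * g2s ^ 2) * (g2s⁻¹ * g2t) = g2t := by group
    have r : (g2t⁻¹ * g2s ^ 2) * (g2s⁻¹ * g2t) * (g2t⁻¹ * g2s ^ 2) = g2t⁻¹ * g2s ^ 3 := by group
    rw [l, r, hs3]
    group
  · have l : ((g2s⁻¹ * g2t) * (g2t⁻¹ * g2s ^ 2) * (g2s⁻¹ * g2t)) ^ 4 = g2t ^ 4 := by group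
    rw [l, ht4]

def fhom : G2 →* G1 := PresentedGroup.toGroup hf
def ghom : G1 →* G2 := PresentedGroup.toGroup hg

lemma gf : ghom.comp fhom = MonoidHom.id G2 := by
  ext x
  fin_cases x <;>
    simp only [MonoidHom.comp_apply, MonoidHom.id_apply, fhom, ghom,
      PresentedGroup.toGroup.of, Ff, Fg, Matrix.cons_val_zero, Matrix.cons_val_one,
      Matrix.head_cons, map_mul, map_inv, map_pow]
  · show (g2s⁻¹ * g2t) * (g2t⁻¹ * g2s ^ 2) = g2s
    group
  · show (g2s⁻¹ * g2t) * (g2t⁻¹ * g2s ^ 2) * (g2s⁻¹ * g2t) = g2t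
    group

lemma fg : fhom.comp ghom = MonoidHom.id G1 := by
  ext x
  fin_cases x <;>
    simp only [MonoidHom.comp_apply, MonoidHom.id_apply, fhom, ghom,
      PresentedGroup.toGroup.of, Ff, Fg, Matrix.cons_val_zero, Matrix.cons_val_one,
      Matrix.head_cons, map_mul, map_inv, map_pow]
  · show (ga * gb)⁻¹ * (ga * gb * ga) = ga
    group
  · show (ga * gb * ga)⁻¹ * (ga * gb) ^ 2 = gb
    simp [pow_succ, mul_assoc, mul_inv_rev, inv_mul_cancel_left]
end

theorem stmt3 :
    ∃ φ : G2 ≃* G1,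
      φ g2s = ga * gb ∧ φ g2t = ga * gb * ga ∧
      φ.symm ga = g2s⁻¹ * g2t ∧ φ.symm gb = g2t⁻¹ * g2s ^ 2 := by
  refine ⟨MonoidHom.toMulEquiv fhom ghom ?_ ?_, ?_, ?_, ?_, ?_⟩
  · exact gf
  · exact fg
  · simpa [fhom, g2s, Ff] using (PresentedGroup.toGroup.of hf (x := 0))
  · simpa [fhom, g2t, Ff] using (PresentedGroup.toGroup.of hf (x := 1))
  · simpa [ghom, ga, Fg] using (PresentedGroup.toGroup.of hg (x := 0))
  · simpa [ghom, gb, Fg] using (PresentedGroup.toGroup.of hg (x := 1))
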